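/- Fix a real α > 1 and define g(λ) = i·(α·p(λ) + cos(p(λ))) with p(λ) = −i·Log(−i·tanh λ). Then for every real x the function g is complex differentiable at λ = x + iπ/4 with derivative g′(x + iπ/4) = −2i·(α + tanh(2x))/cosh(2x), and for every real x ≠ 0 it is complex differentiable at λ = x − iπ/4 with derivative g′(x − iπ/4) = 2i·(α + tanh(2x))/cosh(2x); in both cases the derivative is nonzero, so g has no saddle points on the lines ℝ ± iπ/4 (away from −iπ/4). -/

import Mathlib

open Complex Real

noncomputable def momentum (l : ℂ) : ℂ := -Complex.I * Complex.log (-Complex.I * Complex.tanh l)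

noncomputable def phase (α : ℝ) (l : ℂ) : ℂ :=
  Complex.I * ((α : ℂ) * momentum l + Complex.cos (momentum l))

lemma hasDerivAt_ctanh (l : ℂ) (hc : Complex.cosh l ≠ 0) :
    HasDerivAt Complex.tanh (1 / Complex.cosh l ^ 2) l := by
  have h := (Complex.hasDerivAt_sinh l).div (Complex.hasDerivAt_cosh l) hc
  have e : (Complex.cosh l * Complex.cosh l - Complex.sinh l * Complex.sinh l) /
      Complex.cosh l ^ 2 = 1 / Complex.cosh l ^ 2 := by
    rw [show Complex.cosh l * Complex.cosh l - Complex.sinh l * Complex.sinh l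
        = Complex.cosh l ^ 2 - Complex.sinh l ^ 2 by ring, Complex.cosh_sq_sub_sinh_sq]
  rw [e] at h
  have et : Complex.tanh = Complex.sinh / Complex.cosh := by
    funext z; exact Complex.tanh_eq_sinh_div_cosh z
  rw [et]; exact h

lemma sin_momentum (l : ℂ) (hc : Complex.cosh l ≠ 0) (hs : Complex.sinh l ≠ 0) :
    Complex.sin (momentum l) = -Complex.cosh (2 * l) / Complex.sinh (2 * l) := by
  have ht : Complex.tanh l ≠ 0 := by
    rw [Complex.tanh_eq_sinh_div_cosh]; exact div_ne_zero hs hc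
  have hw : -Complex.I * Complex.tanh l ≠ 0 := mul_ne_zero (by simp [Complex.I_ne_zero]) ht
  have e1 : momentum l * Complex.I = Complex.log (-Complex.I * Complex.tanh l) := by
    unfold momentum
    linear_combination (-Complex.log (-Complex.I * Complex.tanh l)) * Complex.I_sq
  have e2 : -(momentum l) * Complex.I = -Complex.log (-Complex.I * Complex.tanh l) := by
    rw [neg_mul, e1]
  have h1 : Complex.sin (momentum l)
      = ((-Complex.I * Complex.tanh l)⁻¹ - (-Complex.I * Complex.tanh l)) * Complex.I / 2 := by
    show ((Complex.exp (-(momentum l) * Complex.I) - Complex.exp (momentum l * Complex.I))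
        * Complex.I) / 2 = _
    rw [e1, e2, Complex.exp_neg, Complex.exp_log hw]
  rw [h1, Complex.tanh_eq_sinh_div_cosh, Complex.sinh_two_mul, Complex.cosh_two_mul]
  rw [show -Complex.I * (Complex.sinh l / Complex.cosh l)
      = (-Complex.I * Complex.sinh l) / Complex.cosh l by ring]
  rw [inv_div]
  have hIs : -Complex.I * Complex.sinh l ≠ 0 := mul_ne_zero (by simp [Complex.I_ne_zero]) hs
  field_simp
  ring_nf
  linear_combination (Complex.sinh l ^ 2) * Complex.I_sq

lemma phase_hasDerivAt (α : ℝ) (l : ℂ) (hc : Complex.cosh l ≠ 0) (hs : Complex.sinh l ≠ 0)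
    (hsp : -Complex.I * Complex.tanh l ∈ Complex.slitPlane) :
    HasDerivAt (phase α)
      (Complex.I * (((α : ℂ) - Complex.sin (momentum l))
        * (-Complex.I / (Complex.sinh l * Complex.cosh l)))) l := by
  have ht : Complex.tanh l ≠ 0 := by
    rw [Complex.tanh_eq_sinh_div_cosh]; exact div_ne_zero hs hc
  have h1 : HasDerivAt (fun z => -Complex.I * Complex.tanh z)
      (-Complex.I * (1 / Complex.cosh l ^ 2)) l := (hasDerivAt_ctanh l hc).const_mul _
  have h2 := h1.clog hsp
  have h3 : HasDerivAt momentum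
      (-Complex.I * ((-Complex.I * (1 / Complex.cosh l ^ 2)) / (-Complex.I * Complex.tanh l)))
      l := h2.const_mul _
  have h5 := ((h3.const_mul (α : ℂ)).add h3.ccos).const_mul Complex.I
  have hm : -Complex.I * ((-Complex.I * (1 / Complex.cosh l ^ 2)) / (-Complex.I * Complex.tanh l))
      = -Complex.I / (Complex.sinh l * Complex.cosh l) := by
    rw [Complex.tanh_eq_sinh_div_cosh]
    field_simp
  rw [hm] at h5
  refine h5.congr_deriv ?_
  ring

lemma cosh_I_pi_div_four : Complex.cosh (Complex.I * ((π : ℂ) / 4)) = ((Real.sqrt 2 / 2 : ℝ) : ℂ) := by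
  rw [show Complex.I * ((π : ℂ) / 4) = ((π / 4 : ℝ) : ℂ) * Complex.I by push_cast; ring,
    Complex.cosh_mul_I, ← Complex.ofReal_cos, Real.cos_pi_div_four]

lemma sinh_I_pi_div_four : Complex.sinh (Complex.I * ((π : ℂ) / 4)) = ((Real.sqrt 2 / 2 : ℝ) : ℂ) * Complex.I := by
  rw [show Complex.I * ((π : ℂ) / 4) = ((π / 4 : ℝ) : ℂ) * Complex.I by push_cast; ring,
    Complex.sinh_mul_I, ← Complex.ofReal_sin, Real.sin_pi_div_four]

lemma cosh_I_pi_div_two : Complex.cosh (Complex.I * ((π : ℂ) / 2)) = 0 := by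
  rw [show Complex.I * ((π : ℂ) / 2) = ((π / 2 : ℝ) : ℂ) * Complex.I by push_cast; ring,
    Complex.cosh_mul_I, ← Complex.ofReal_cos, Real.cos_pi_div_two, Complex.ofReal_zero]

lemma sinh_I_pi_div_two : Complex.sinh (Complex.I * ((π : ℂ) / 2)) = Complex.I := by
  rw [show Complex.I * ((π : ℂ) / 2) = ((π / 2 : ℝ) : ℂ) * Complex.I by push_cast; ring,
    Complex.sinh_mul_I, ← Complex.ofReal_sin, Real.sin_pi_div_two, Complex.ofReal_one, one_mul]

lemma sqrt2_ne : ((Real.sqrt 2 / 2 : ℝ) : ℂ) ≠ 0 := by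
  simp only [ne_eq, Complex.ofReal_eq_zero]
  positivity

theorem phase_deriv_on_lines (α : ℝ) (hα : 1 < α) :
    (∀ x : ℝ,
      HasDerivAt (phase α)
        (-2 * Complex.I * ((α : ℂ) + (Real.tanh (2 * x) : ℂ)) / (Real.cosh (2 * x) : ℂ))
        (x + Complex.I * (π / 4)) ∧
      -2 * Complex.I * ((α : ℂ) + (Real.tanh (2 * x) : ℂ)) / (Real.cosh (2 * x) : ℂ) ≠ 0) ∧
    (∀ x : ℝ, x ≠ 0 →
      HasDerivAt (phase α)
        (2 * Complex.I * ((α : ℂ) + (Real.tanh (2 * x) : ℂ)) / (Real.cosh (2 * x) : ℂ))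
        (x - Complex.I * (π / 4)) ∧
      2 * Complex.I * ((α : ℂ) + (Real.tanh (2 * x) : ℂ)) / (Real.cosh (2 * x) : ℂ) ≠ 0) := by
  have key_ne : ∀ x : ℝ, ((2 : ℂ) * Complex.I * ((α : ℂ) + (Real.tanh (2 * x) : ℂ))
      / (Real.cosh (2 * x) : ℂ)) ≠ 0 := by
    intro x
    have hc0 := Real.cosh_pos (2 * x)
    have h1 : (0 : ℝ) < α + Real.tanh (2 * x) := by
      rw [Real.tanh_eq_sinh_div_cosh]
      have hcs : Real.cosh (2 * x) + Real.sinh (2 * x) = Real.exp (2 * x) :=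
        Real.cosh_add_sinh _
      have he := Real.exp_pos (2 * x)
      have hnum : (0 : ℝ) < α * Real.cosh (2 * x) + Real.sinh (2 * x) := by nlinarith
      have := div_pos hnum hc0
      calc (0 : ℝ) < (α * Real.cosh (2 * x) + Real.sinh (2 * x)) / Real.cosh (2 * x) := this
        _ = α + Real.sinh (2 * x) / Real.cosh (2 * x) := by field_simp
    have h2 : ((α : ℂ) + (Real.tanh (2 * x) : ℂ)) ≠ 0 := by
      rw [show ((α : ℂ) + (Real.tanh (2 * x) : ℂ)) = ((α + Real.tanh (2 * x) : ℝ) : ℂ) by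
        push_cast; ring]
      exact Complex.ofReal_ne_zero.mpr h1.ne'
    have h3 : ((Real.cosh (2 * x) : ℝ) : ℂ) ≠ 0 := Complex.ofReal_ne_zero.mpr hc0.ne'
    exact div_ne_zero (mul_ne_zero (mul_ne_zero two_ne_zero Complex.I_ne_zero) h2) h3
  constructor
  · intro x
    set l : ℂ := (x : ℂ) + Complex.I * ((π : ℂ) / 4) with hl
    have hcosh : Complex.cosh l = ((Real.sqrt 2 / 2 : ℝ) : ℂ)
        * (((Real.cosh x : ℝ) : ℂ) + ((Real.sinh x : ℝ) : ℂ) * Complex.I) := by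
      rw [hl, Complex.cosh_add, cosh_I_pi_div_four, sinh_I_pi_div_four,
        ← Complex.ofReal_cosh, ← Complex.ofReal_sinh]
      ring
    have hsinh : Complex.sinh l = ((Real.sqrt 2 / 2 : ℝ) : ℂ)
        * (((Real.sinh x : ℝ) : ℂ) + ((Real.cosh x : ℝ) : ℂ) * Complex.I) := by
      rw [hl, Complex.sinh_add, cosh_I_pi_div_four, sinh_I_pi_div_four,
        ← Complex.ofReal_cosh, ← Complex.ofReal_sinh]
      ring
    have hz1 : (((Real.cosh x : ℝ) : ℂ) + ((Real.sinh x : ℝ) : ℂ) * Complex.I) ≠ 0 := by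
      intro h
      have h' := congrArg Complex.re h
      simp [Complex.add_re, Complex.mul_re, Complex.cosh_ofReal_re, Complex.sinh_ofReal_re,
        Complex.cosh_ofReal_im, Complex.sinh_ofReal_im] at h'
      exact (Real.cosh_pos x).ne' h'
    have hz2 : (((Real.sinh x : ℝ) : ℂ) + ((Real.cosh x : ℝ) : ℂ) * Complex.I) ≠ 0 := by
      intro h
      have h' := congrArg Complex.im h
      simp [Complex.add_im, Complex.mul_im, Complex.cosh_ofReal_re, Complex.sinh_ofReal_re,
        Complex.cosh_ofReal_im, Complex.sinh_ofReal_im] at h'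
      exact (Real.cosh_pos x).ne' h'
    have hc : Complex.cosh l ≠ 0 := by rw [hcosh]; exact mul_ne_zero sqrt2_ne hz1
    have hs : Complex.sinh l ≠ 0 := by rw [hsinh]; exact mul_ne_zero sqrt2_ne hz2
    have hw : -Complex.I * Complex.tanh l
        = (((Real.cosh x : ℝ) : ℂ) - ((Real.sinh x : ℝ) : ℂ) * Complex.I)
          / (((Real.cosh x : ℝ) : ℂ) + ((Real.sinh x : ℝ) : ℂ) * Complex.I) := by
      rw [Complex.tanh_eq_sinh_div_cosh, hsinh, hcosh,
        mul_div_mul_left _ _ sqrt2_ne, ← mul_div_assoc, div_eq_div_iff hz1 hz1]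
      linear_combination (-((Real.cosh x : ℝ) : ℂ)
        * (((Real.cosh x : ℝ) : ℂ) + ((Real.sinh x : ℝ) : ℂ) * Complex.I)) * Complex.I_sq
    have hsp : -Complex.I * Complex.tanh l ∈ Complex.slitPlane := by
      rw [Complex.mem_slitPlane_iff]
      left
      rw [hw, Complex.div_re]
      have hN : (0 : ℝ) < Complex.normSq (((Real.cosh x : ℝ) : ℂ)
          + ((Real.sinh x : ℝ) : ℂ) * Complex.I) := by
        rw [Complex.normSq_pos]; exact hz1
      have hid := Real.cosh_sq_sub_sinh_sq x
      have hre : (((Real.cosh x : ℝ) : ℂ) - ((Real.sinh x : ℝ) : ℂ) * Complex.I).re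
          = Real.cosh x := by
        simp [Complex.cosh_ofReal_re, Complex.sinh_ofReal_re, Complex.cosh_ofReal_im,
          Complex.sinh_ofReal_im]
      have him : (((Real.cosh x : ℝ) : ℂ) - ((Real.sinh x : ℝ) : ℂ) * Complex.I).im
          = -Real.sinh x := by
        simp [Complex.cosh_ofReal_re, Complex.sinh_ofReal_re, Complex.cosh_ofReal_im,
          Complex.sinh_ofReal_im]
      have hre2 : (((Real.cosh x : ℝ) : ℂ) + ((Real.sinh x : ℝ) : ℂ) * Complex.I).re
          = Real.cosh x := by
        simp [Complex.cosh_ofReal_re, Complex.sinh_ofReal_re, Complex.cosh_ofReal_im,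
          Complex.sinh_ofReal_im]
      have him2 : (((Real.cosh x : ℝ) : ℂ) + ((Real.sinh x : ℝ) : ℂ) * Complex.I).im
          = Real.sinh x := by
        simp [Complex.cosh_ofReal_re, Complex.sinh_ofReal_re, Complex.cosh_ofReal_im,
          Complex.sinh_ofReal_im]
      rw [hre, him, hre2, him2, ← add_div]
      apply div_pos _ hN
      nlinarith [Real.cosh_pos x]
    have h2l : 2 * l = ((2 * x : ℝ) : ℂ) + Complex.I * ((π : ℂ) / 2) := by
      rw [hl]; push_cast; ring
    have hs2 : Complex.sinh (2 * l) = Complex.I * ((Real.cosh (2 * x) : ℝ) : ℂ) := by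
      rw [h2l, Complex.sinh_add, cosh_I_pi_div_two, sinh_I_pi_div_two, ← Complex.ofReal_cosh]
      ring
    have hc2 : Complex.cosh (2 * l) = Complex.I * ((Real.sinh (2 * x) : ℝ) : ℂ) := by
      rw [h2l, Complex.cosh_add, cosh_I_pi_div_two, sinh_I_pi_div_two, ← Complex.ofReal_sinh]
      ring
    have hsc : Complex.sinh l * Complex.cosh l
        = Complex.I * ((Real.cosh (2 * x) : ℝ) : ℂ) / 2 := by
      have h := Complex.sinh_two_mul l
      rw [hs2] at h
      linear_combination (-1/2 : ℂ) * h
    have hd := phase_hasDerivAt α l hc hs hsp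
    have hC : ((Real.cosh (2 * x) : ℝ) : ℂ) ≠ 0 :=
      Complex.ofReal_ne_zero.mpr (Real.cosh_pos (2 * x)).ne'
    have hval : Complex.I * (((α : ℂ) - Complex.sin (momentum l))
        * (-Complex.I / (Complex.sinh l * Complex.cosh l)))
        = -2 * Complex.I * ((α : ℂ) + (Real.tanh (2 * x) : ℂ)) / (Real.cosh (2 * x) : ℂ) := by
      rw [sin_momentum l hc hs, hc2, hs2, hsc]
      have ea : -(Complex.I * ((Real.sinh (2 * x) : ℝ) : ℂ))
          / (Complex.I * ((Real.cosh (2 * x) : ℝ) : ℂ))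
          = -(((Real.sinh (2 * x) : ℝ) : ℂ) / ((Real.cosh (2 * x) : ℝ) : ℂ)) := by
        rw [neg_div, mul_div_mul_left _ _ Complex.I_ne_zero]
      have eb : -Complex.I / (Complex.I * ((Real.cosh (2 * x) : ℝ) : ℂ) / 2)
          = -2 / ((Real.cosh (2 * x) : ℝ) : ℂ) := by
        rw [div_eq_div_iff (by exact div_ne_zero (mul_ne_zero Complex.I_ne_zero hC) two_ne_zero)
          hC]
        ring
      rw [ea, eb, show ((Real.tanh (2 * x) : ℝ) : ℂ)
          = ((Real.sinh (2 * x) : ℝ) : ℂ) / ((Real.cosh (2 * x) : ℝ) : ℂ) by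
          rw [Complex.ofReal_tanh, Complex.tanh_eq_sinh_div_cosh, Complex.ofReal_sinh,
            Complex.ofReal_cosh]]
      ring
    rw [hval] at hd
    refine ⟨hd, ?_⟩
    intro h
    apply key_ne x
    rw [show (2 : ℂ) * Complex.I * ((α : ℂ) + (Real.tanh (2 * x) : ℂ)) / (Real.cosh (2 * x) : ℂ)
      = -(-2 * Complex.I * ((α : ℂ) + (Real.tanh (2 * x) : ℂ)) / (Real.cosh (2 * x) : ℂ)) by ring,
      h, neg_zero]
  · intro x hx
    set l : ℂ := (x : ℂ) - Complex.I * ((π : ℂ) / 4) with hl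
    have hcosh : Complex.cosh l = ((Real.sqrt 2 / 2 : ℝ) : ℂ)
        * (((Real.cosh x : ℝ) : ℂ) - ((Real.sinh x : ℝ) : ℂ) * Complex.I) := by
      rw [hl, Complex.cosh_sub, cosh_I_pi_div_four, sinh_I_pi_div_four,
        ← Complex.ofReal_cosh, ← Complex.ofReal_sinh]
      ring
    have hsinh : Complex.sinh l = ((Real.sqrt 2 / 2 : ℝ) : ℂ)
        * (((Real.sinh x : ℝ) : ℂ) - ((Real.cosh x : ℝ) : ℂ) * Complex.I) := by
      rw [hl, Complex.sinh_sub, cosh_I_pi_div_four, sinh_I_pi_div_four,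
        ← Complex.ofReal_cosh, ← Complex.ofReal_sinh]
      ring
    have hz1 : (((Real.cosh x : ℝ) : ℂ) - ((Real.sinh x : ℝ) : ℂ) * Complex.I) ≠ 0 := by
      intro h
      have h' := congrArg Complex.re h
      simp [Complex.sub_re, Complex.mul_re, Complex.cosh_ofReal_re, Complex.sinh_ofReal_re,
        Complex.cosh_ofReal_im, Complex.sinh_ofReal_im] at h'
      exact (Real.cosh_pos x).ne' h'
    have hz2 : (((Real.sinh x : ℝ) : ℂ) - ((Real.cosh x : ℝ) : ℂ) * Complex.I) ≠ 0 := by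
      intro h
      have h' := congrArg Complex.im h
      simp [Complex.sub_im, Complex.mul_im, Complex.cosh_ofReal_re, Complex.sinh_ofReal_re,
        Complex.cosh_ofReal_im, Complex.sinh_ofReal_im] at h'
      exact (Real.cosh_pos x).ne' h'
    have hc : Complex.cosh l ≠ 0 := by rw [hcosh]; exact mul_ne_zero sqrt2_ne hz1
    have hs : Complex.sinh l ≠ 0 := by rw [hsinh]; exact mul_ne_zero sqrt2_ne hz2
    have hw : -Complex.I * Complex.tanh l
        = (-(((Real.cosh x : ℝ) : ℂ) + ((Real.sinh x : ℝ) : ℂ) * Complex.I))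
          / (((Real.cosh x : ℝ) : ℂ) - ((Real.sinh x : ℝ) : ℂ) * Complex.I) := by
      rw [Complex.tanh_eq_sinh_div_cosh, hsinh, hcosh,
        mul_div_mul_left _ _ sqrt2_ne, ← mul_div_assoc, div_eq_div_iff hz1 hz1]
      linear_combination (((Real.cosh x : ℝ) : ℂ)
        * (((Real.cosh x : ℝ) : ℂ) - ((Real.sinh x : ℝ) : ℂ) * Complex.I)) * Complex.I_sq
    have hsp : -Complex.I * Complex.tanh l ∈ Complex.slitPlane := by
      rw [Complex.mem_slitPlane_iff]
      right
      rw [hw, Complex.div_im]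
      have hN : (0 : ℝ) < Complex.normSq (((Real.cosh x : ℝ) : ℂ)
          - ((Real.sinh x : ℝ) : ℂ) * Complex.I) := by
        rw [Complex.normSq_pos]; exact hz1
      have hre : (-(((Real.cosh x : ℝ) : ℂ) + ((Real.sinh x : ℝ) : ℂ) * Complex.I)).re
          = -Real.cosh x := by
        simp [Complex.cosh_ofReal_re, Complex.sinh_ofReal_re, Complex.cosh_ofReal_im,
          Complex.sinh_ofReal_im]
      have him : (-(((Real.cosh x : ℝ) : ℂ) + ((Real.sinh x : ℝ) : ℂ) * Complex.I)).im
          = -Real.sinh x := by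
        simp [Complex.cosh_ofReal_re, Complex.sinh_ofReal_re, Complex.cosh_ofReal_im,
          Complex.sinh_ofReal_im]
      have hre2 : (((Real.cosh x : ℝ) : ℂ) - ((Real.sinh x : ℝ) : ℂ) * Complex.I).re
          = Real.cosh x := by
        simp [Complex.cosh_ofReal_re, Complex.sinh_ofReal_re, Complex.cosh_ofReal_im,
          Complex.sinh_ofReal_im]
      have him2 : (((Real.cosh x : ℝ) : ℂ) - ((Real.sinh x : ℝ) : ℂ) * Complex.I).im
          = -Real.sinh x := by
        simp [Complex.cosh_ofReal_re, Complex.sinh_ofReal_re, Complex.cosh_ofReal_im,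
          Complex.sinh_ofReal_im]
      rw [hre, him, hre2, him2, div_sub_div_same]
      apply div_ne_zero _ hN.ne'
      have hsne : Real.sinh x ≠ 0 := Real.sinh_ne_zero.mpr hx
      have hexp : -Real.sinh x * Real.cosh x - -Real.cosh x * -Real.sinh x
          = -2 * (Real.sinh x * Real.cosh x) := by ring
      rw [hexp]
      exact mul_ne_zero (by norm_num) (mul_ne_zero hsne (Real.cosh_pos x).ne')
    have h2l : 2 * l = ((2 * x : ℝ) : ℂ) - Complex.I * ((π : ℂ) / 2) := by
      rw [hl]; push_cast; ring
    have hs2 : Complex.sinh (2 * l) = -(Complex.I * ((Real.cosh (2 * x) : ℝ) : ℂ)) := by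
      rw [h2l, Complex.sinh_sub, cosh_I_pi_div_two, sinh_I_pi_div_two, ← Complex.ofReal_cosh]
      ring
    have hc2 : Complex.cosh (2 * l) = -(Complex.I * ((Real.sinh (2 * x) : ℝ) : ℂ)) := by
      rw [h2l, Complex.cosh_sub, cosh_I_pi_div_two, sinh_I_pi_div_two, ← Complex.ofReal_sinh]
      ring
    have hsc : Complex.sinh l * Complex.cosh l
        = -(Complex.I * ((Real.cosh (2 * x) : ℝ) : ℂ)) / 2 := by
      have h := Complex.sinh_two_mul l
      rw [hs2] at h
      linear_combination (-1/2 : ℂ) * h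
    have hd := phase_hasDerivAt α l hc hs hsp
    have hC : ((Real.cosh (2 * x) : ℝ) : ℂ) ≠ 0 :=
      Complex.ofReal_ne_zero.mpr (Real.cosh_pos (2 * x)).ne'
    have hval : Complex.I * (((α : ℂ) - Complex.sin (momentum l))
        * (-Complex.I / (Complex.sinh l * Complex.cosh l)))
        = 2 * Complex.I * ((α : ℂ) + (Real.tanh (2 * x) : ℂ)) / (Real.cosh (2 * x) : ℂ) := by
      rw [sin_momentum l hc hs, hc2, hs2, hsc]
      have ea : - -(Complex.I * ((Real.sinh (2 * x) : ℝ) : ℂ))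
          / -(Complex.I * ((Real.cosh (2 * x) : ℝ) : ℂ))
          = -(((Real.sinh (2 * x) : ℝ) : ℂ) / ((Real.cosh (2 * x) : ℝ) : ℂ)) := by
        rw [neg_div_neg_eq, neg_div, mul_div_mul_left _ _ Complex.I_ne_zero]
      have hden : -(Complex.I * ((Real.cosh (2 * x) : ℝ) : ℂ)) / 2 ≠ 0 :=
        div_ne_zero (neg_ne_zero.mpr (mul_ne_zero Complex.I_ne_zero hC)) two_ne_zero
      have eb : -Complex.I / (-(Complex.I * ((Real.cosh (2 * x) : ℝ) : ℂ)) / 2)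
          = 2 / ((Real.cosh (2 * x) : ℝ) : ℂ) := by
        rw [div_eq_div_iff hden hC]
        ring
      rw [ea, eb, show ((Real.tanh (2 * x) : ℝ) : ℂ)
          = ((Real.sinh (2 * x) : ℝ) : ℂ) / ((Real.cosh (2 * x) : ℝ) : ℂ) by
          rw [Complex.ofReal_tanh, Complex.tanh_eq_sinh_div_cosh, Complex.ofReal_sinh,
            Complex.ofReal_cosh]]
      ring
    rw [hval] at hd
    exact ⟨hd, key_ne x⟩
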